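/- arXiv:2202.01860 — 5 statements merged into one kernel-verified Lean document; each statement's English description precedes it below -/
import Mathlib

section
/- For φ₁, φ₂, φ₃ ∈ ℂ² with images x₁, x₂, x₃ ∈ ℝ³ under the Hopf-type map, the real part of the triple product satisfies Re((φ₁*φ₂)(φ₃*φ₁)(φ₂*φ₃)) = (1/4)(|x₁||x₂||x₃| + |x₁|(x₂·x₃) + |x₂|(x₃·x₁) + |x₃|(x₁·x₂)). -/
open Matrix

/-- The Hopf-type map `(z,u) ↦ (2Re(z̄u), 2Im(z̄u), |z|² − |u|²)` from `ℂ²` to `ℝ³`. -/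
noncomputable def hopf (φ : ℂ × ℂ) : Fin 3 → ℝ :=
  ![2 * ((starRingEnd ℂ) φ.1 * φ.2).re, 2 * ((starRingEnd ℂ) φ.1 * φ.2).im,
    ‖φ.1‖ ^ 2 - ‖φ.2‖ ^ 2]

/-- The Hermitian inner product `φ*ψ = z̄₁z₂ + ū₁u₂` on `ℂ²`. -/
noncomputable def herm (φ ψ : ℂ × ℂ) : ℂ :=
  (starRingEnd ℂ) φ.1 * ψ.1 + (starRingEnd ℂ) φ.2 * ψ.2

/-- The squared Hermitian norm `‖φ‖² = |z|² + |u|²`. -/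
noncomputable def nsq (φ : ℂ × ℂ) : ℝ :=
  ‖φ.1‖ ^ 2 + ‖φ.2‖ ^ 2

lemma sqrt_dot_self (φ : ℂ × ℂ) : Real.sqrt (hopf φ ⬝ᵥ hopf φ) = nsq φ := by
  have h : hopf φ ⬝ᵥ hopf φ = nsq φ ^ 2 := by
    simp only [hopf, nsq, dotProduct, Fin.sum_univ_three, Matrix.cons_val_zero,
      Matrix.cons_val_one, Matrix.head_cons, Matrix.cons_val_two, Matrix.tail_cons,
      Complex.sq_norm, Complex.normSq_apply, Complex.mul_re, Complex.mul_im,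
      Complex.conj_re, Complex.conj_im]
    ring
  rw [h]; unfold nsq; rw [Real.sqrt_sq (by positivity : (0:ℝ) ≤ ‖φ.1‖ ^ 2 + ‖φ.2‖ ^ 2)]

theorem re_triple_product (φ₁ φ₂ φ₃ : ℂ × ℂ) :
    (herm φ₁ φ₂ * herm φ₃ φ₁ * herm φ₂ φ₃).re
      = (1 / 4) *
        (Real.sqrt (hopf φ₁ ⬝ᵥ hopf φ₁) * Real.sqrt (hopf φ₂ ⬝ᵥ hopf φ₂) *
            Real.sqrt (hopf φ₃ ⬝ᵥ hopf φ₃)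
          + Real.sqrt (hopf φ₁ ⬝ᵥ hopf φ₁) * (hopf φ₂ ⬝ᵥ hopf φ₃)
          + Real.sqrt (hopf φ₂ ⬝ᵥ hopf φ₂) * (hopf φ₃ ⬝ᵥ hopf φ₁)
          + Real.sqrt (hopf φ₃ ⬝ᵥ hopf φ₃) * (hopf φ₁ ⬝ᵥ hopf φ₂)) := by
  simp only [sqrt_dot_self]
  simp only [herm, hopf, nsq, dotProduct, Fin.sum_univ_three, Matrix.cons_val_zero,
    Matrix.cons_val_one, Matrix.head_cons, Matrix.cons_val_two, Matrix.tail_cons,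
    Complex.sq_norm, Complex.normSq_apply, Complex.mul_re, Complex.mul_im, Complex.add_re,
    Complex.add_im, Complex.conj_re, Complex.conj_im]
  ring
end

section
/- If φ₁, φ₂, φ₃ ∈ ℂ² all lie on the three-sphere of radius √R (i.e., ‖φᵢ‖² = R for each i), then Re((φ₁*φ₂)(φ₃*φ₁)(φ₂*φ₃)) = (R/2)(|φ₁*φ₂|² + |φ₃*φ₁|² + |φ₂*φ₃|² − R²). -/
open Matrix

lemma herm_conj (φ ψ : ℂ × ℂ) : (starRingEnd ℂ) (herm φ ψ) = herm ψ φ := by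
  simp only [herm, map_add, _root_.map_mul, Complex.conj_conj]; ring

lemma herm_self (φ : ℂ × ℂ) : herm φ φ = (nsq φ : ℂ) := by
  simp only [herm, nsq, Complex.sq_norm, ← Complex.normSq_eq_conj_mul_self]
  push_cast
  ring

lemma herm_mul_conj (φ ψ : ℂ × ℂ) :
    herm φ ψ * herm ψ φ = ((‖herm φ ψ‖ ^ 2 : ℝ) : ℂ) := by
  rw [← herm_conj φ ψ, Complex.mul_conj, Complex.sq_norm]

theorem re_triple_product_sphere (R : ℝ) (hR : 0 < R) (φ₁ φ₂ φ₃ : ℂ × ℂ)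
    (h₁ : nsq φ₁ = R) (h₂ : nsq φ₂ = R) (h₃ : nsq φ₃ = R) :
    (herm φ₁ φ₂ * herm φ₃ φ₁ * herm φ₂ φ₃).re
      = (R / 2) * (‖herm φ₁ φ₂‖ ^ 2 + ‖herm φ₃ φ₁‖ ^ 2
          + ‖herm φ₂ φ₃‖ ^ 2 - R ^ 2) := by
  -- Gram determinant identity: three vectors in ℂ² have singular Gram matrix.
  have key : herm φ₁ φ₂ * herm φ₃ φ₁ * herm φ₂ φ₃
      + herm φ₂ φ₁ * herm φ₁ φ₃ * herm φ₃ φ₂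
      = herm φ₁ φ₁ * (herm φ₂ φ₃ * herm φ₃ φ₂)
        + herm φ₂ φ₂ * (herm φ₃ φ₁ * herm φ₁ φ₃)
        + herm φ₃ φ₃ * (herm φ₁ φ₂ * herm φ₂ φ₁)
        - herm φ₁ φ₁ * herm φ₂ φ₂ * herm φ₃ φ₃ := by
    simp only [herm]
    ring
  have hconj : herm φ₂ φ₁ * herm φ₁ φ₃ * herm φ₃ φ₂
      = (starRingEnd ℂ) (herm φ₁ φ₂ * herm φ₃ φ₁ * herm φ₂ φ₃) := by
    simp only [_root_.map_mul, herm_conj]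
  rw [hconj, herm_self, herm_self, herm_self, h₁, h₂, h₃,
    herm_mul_conj φ₂ φ₃, herm_mul_conj φ₃ φ₁, herm_mul_conj φ₁ φ₂,
    Complex.add_conj] at key
  have key' : 2 * (herm φ₁ φ₂ * herm φ₃ φ₁ * herm φ₂ φ₃).re
      = R * (‖herm φ₂ φ₃‖ ^ 2) + R * (‖herm φ₃ φ₁‖ ^ 2)
        + R * (‖herm φ₁ φ₂‖ ^ 2) - R * R * R := by
    exact_mod_cast key
  linarith
end

section
/- Let Γ₁,…,Γ_N be nonzero real numbers and D_Γ = diag(Γ₁,…,Γ_N). Define 𝔲(D_Γ) = { ζ̃ ∈ ℂ^{N×N} : ζ̃ D_Γ + D_Γ ζ̃* = 0 } and on the space 𝔲(N) of skew-Hermitian N×N matrices define the bracket [ξ,η]_Γ := ξ D_Γ⁻¹ η − η D_Γ⁻¹ ξ. Then the linear map ζ̃ ↦ ζ̃ D_Γ is a bijection from 𝔲(D_Γ) onto 𝔲(N), and it intertwines the matrix commutator on 𝔲(D_Γ) with the bracket [·,·]_Γ, i.e., [ζ̃₁, ζ̃₂] D_Γ = [ζ̃₁ D_Γ, ζ̃₂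 D_Γ]_Γ for all ζ̃₁, ζ̃₂ ∈ 𝔲(D_Γ). -/
open Matrix

/-- The map `ζ̃ ↦ ζ̃ D_Γ` is a bijection from `𝔲(D_Γ)` onto the skew-Hermitian
matrices `𝔲(N)`, intertwining the commutator with the modified bracket
`[ξ,η]_Γ = ξ D_Γ⁻¹ η − η D_Γ⁻¹ ξ`. -/
theorem uDGamma_iso (N : ℕ) (Γ : Fin N → ℝ) (hΓ : ∀ i, Γ i ≠ 0)
    (D : Matrix (Fin N) (Fin N) ℂ) (hD : D = Matrix.diagonal fun i => (Γ i : ℂ)) :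
    Set.BijOn (fun ζ : Matrix (Fin N) (Fin N) ℂ => ζ * D)
      {ζ | ζ * D + D * ζᴴ = 0} {ξ | ξᴴ = -ξ} ∧
    ∀ ζ₁ ζ₂ : Matrix (Fin N) (Fin N) ℂ,
      ζ₁ * D + D * ζ₁ᴴ = 0 → ζ₂ * D + D * ζ₂ᴴ = 0 →
      (ζ₁ * ζ₂ - ζ₂ * ζ₁) * D
        = (ζ₁ * D) * D⁻¹ * (ζ₂ * D) - (ζ₂ * D) * D⁻¹ * (ζ₁ * D) := by
  have hdet : IsUnit D.det := by
    rw [hD, Matrix.det_diagonal]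
    exact isUnit_iff_ne_zero.mpr (Finset.prod_ne_zero_iff.mpr fun i _ => by
      exact_mod_cast Complex.ofReal_ne_zero.mpr (hΓ i))
  have hDH : Dᴴ = D := by
    rw [hD, Matrix.diagonal_conjTranspose]
    ext i j
    by_cases h : i = j <;> simp [Matrix.diagonal, h, Complex.conj_ofReal]
  have hDinv : D * D⁻¹ = 1 := Matrix.mul_nonsing_inv D hdet
  have hinvD : D⁻¹ * D = 1 := Matrix.nonsing_inv_mul D hdet
  have hDinvH : D⁻¹ᴴ = D⁻¹ := by rw [Matrix.conjTranspose_nonsing_inv, hDH]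
  constructor
  · refine ⟨fun ζ hζ => ?_, fun ζ₁ h₁ ζ₂ h₂ h => ?_, fun ξ hξ => ?_⟩
    · show (ζ * D)ᴴ = -(ζ * D)
      have := hζ
      simp only [Set.mem_setOf_eq] at this
      rw [Matrix.conjTranspose_mul, hDH]
      linear_combination (norm := noncomm_ring) this
    · have h' : ζ₁ * D = ζ₂ * D := h
      have : ζ₁ * D * D⁻¹ = ζ₂ * D * D⁻¹ := by rw [h']
      rwa [Matrix.mul_assoc, Matrix.mul_assoc, hDinv, Matrix.mul_one, Matrix.mul_one] at this
    · refine ⟨ξ * D⁻¹, ?_, ?_⟩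
      · show ξ * D⁻¹ * D + D * (ξ * D⁻¹)ᴴ = 0
        simp only [Set.mem_setOf_eq] at hξ
        rw [Matrix.mul_assoc, hinvD, Matrix.mul_one, Matrix.conjTranspose_mul, hDinvH,
          ← Matrix.mul_assoc, hDinv, Matrix.one_mul, hξ, add_neg_cancel]
      · show ξ * D⁻¹ * D = ξ
        rw [Matrix.mul_assoc, hinvD, Matrix.mul_one]
  · intro ζ₁ ζ₂ _ _
    rw [Matrix.mul_assoc ζ₁ D D⁻¹, hDinv, Matrix.mul_one,
      Matrix.mul_assoc ζ₂ D D⁻¹, hDinv, Matrix.mul_one]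
    noncomm_ring
end

section
/- Let D_Γ = diag(Γ₁,…,Γ_N) with all Γᵢ nonzero. For every positive integer j, the function C_j(λ) = tr((i D_Γ λ)^j) is infinitesimally invariant: for all skew-Hermitian ξ and λ, the derivative of C_j along the coadjoint direction ad*_ξ λ = λ ξ D_Γ⁻¹ − D_Γ⁻¹ ξ λ vanishes, i.e., tr((i D_Γ λ)^{j−1} · i D_Γ (λ ξ D_Γ⁻¹ − D_Γ⁻¹ ξ λ)) = 0. -/
open Matrix

/-- Infinitesimal invariance of `C_j(λ) = tr((i D_Γ λ)^j)`: the derivative of `C_j`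
along the coadjoint direction `ad*_ξ λ = λ ξ D_Γ⁻¹ − D_Γ⁻¹ ξ λ` vanishes. -/
theorem Casimir_infinitesimal (N : ℕ) (Γ : Fin N → ℝ) (hΓ : ∀ i, Γ i ≠ 0)
    (D : Matrix (Fin N) (Fin N) ℂ) (hD : D = Matrix.diagonal fun i => (Γ i : ℂ))
    (j : ℕ) (hj : 1 ≤ j)
    (ξ lam : Matrix (Fin N) (Fin N) ℂ) (hξ : ξᴴ = -ξ) (hlam : lamᴴ = -lam) :
    Matrix.trace ((Complex.I • (D * lam)) ^ (j - 1) *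
        (Complex.I • (D * (lam * ξ * D⁻¹ - D⁻¹ * ξ * lam)))) = 0 := by
  obtain ⟨k, rfl⟩ : ∃ k, j = k + 1 := ⟨j - 1, (Nat.succ_pred_eq_of_pos hj).symm⟩
  have hdet : IsUnit D.det := by
    rw [hD, Matrix.det_diagonal]
    refine isUnit_iff_ne_zero.mpr (Finset.prod_ne_zero_iff.mpr fun i _ => ?_)
    exact Complex.ofReal_ne_zero.mpr (hΓ i)
  have h1 : D * D⁻¹ = 1 := Matrix.mul_nonsing_inv D hdet
  have h2 : D⁻¹ * D = 1 := Matrix.nonsing_inv_mul D hdet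
  set A := Complex.I • (D * lam) with hA
  have e1 : Complex.I • (D * (lam * ξ * D⁻¹ - D⁻¹ * ξ * lam))
      = A * (ξ * D⁻¹) - ξ * (Complex.I • lam) := by
    rw [hA, mul_sub, smul_sub]
    congr 1
    · rw [smul_mul_assoc, mul_assoc, mul_assoc]
    · rw [mul_smul_comm]
      congr 1
      rw [← mul_assoc, ← mul_assoc, h1, one_mul]
  have e2 : D⁻¹ * A = Complex.I • lam := by
    rw [hA, mul_smul_comm, ← mul_assoc, h2, one_mul]
  rw [Nat.add_sub_cancel, e1, mul_sub, trace_sub]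
  have t1 : (A ^ k * (A * (ξ * D⁻¹))).trace
      = ((Complex.I • lam) * (A ^ k * ξ)).trace := by
    rw [← mul_assoc, ← pow_succ, trace_mul_comm, mul_assoc, pow_succ', ← mul_assoc D⁻¹,
      e2, trace_mul_comm, mul_assoc]
  have t2 : (A ^ k * (ξ * (Complex.I • lam))).trace
      = ((Complex.I • lam) * (A ^ k * ξ)).trace := by
    rw [← mul_assoc, trace_mul_comm]
  rw [t1, t2, sub_self]
end

section
/- Let φ₁,…,φ_N ∈ ℂ² each satisfy ‖φᵢ‖² = R, and set λ_{ij} = (2/R) φᵢ*φⱼ and μ_{ijk} = λ_{ij} λ_{ki} λ_{jk} for distinct i, j, k. Then Re μ_{ijk} = |λ_{ij}|² + |λ_{ki}|² + |λ_{jk}|² − 4. -/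
open Matrix

/-- The Gram determinant of three vectors in `ℂ²` vanishes (a pure ring identity
when conjugates are treated as independent variables). -/
lemma gram_det (a b c d e f a' b' c' d' e' f' : ℂ) :
    (a'*a + b'*b)*(c'*c + d'*d)*(e'*e + f'*f)
      + (a'*c + b'*d)*(c'*e + d'*f)*(e'*a + f'*b)
      + (a'*e + b'*f)*(e'*c + f'*d)*(c'*a + d'*b)
    = (a'*a + b'*b)*(c'*e + d'*f)*(e'*c + f'*d)
      + (c'*c + d'*d)*(a'*e + b'*f)*(e'*a + f'*b)
      + (e'*e + f'*f)*(a'*c + b'*d)*(c'*a + d'*b) := by ring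

lemma herm_symm (φ ψ : ℂ × ℂ) : herm ψ φ = (starRingEnd ℂ) (herm φ ψ) := by
  simp [herm]; ring

theorem re_mu_ijk (N : ℕ) (R : ℝ) (hR : 0 < R) (φ : Fin N → ℂ × ℂ)
    (hsphere : ∀ i, nsq (φ i) = R) (i j k : Fin N)
    (hij : i ≠ j) (hjk : j ≠ k) (hik : i ≠ k) :
    ((2 / R : ℂ) * herm (φ i) (φ j) * ((2 / R : ℂ) * herm (φ k) (φ i)) *
        ((2 / R : ℂ) * herm (φ j) (φ k))).re
      = ‖(2 / R : ℂ) * herm (φ i) (φ j)‖ ^ 2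
        + ‖(2 / R : ℂ) * herm (φ k) (φ i)‖ ^ 2
        + ‖(2 / R : ℂ) * herm (φ j) (φ k)‖ ^ 2 - 4 := by
  set p := herm (φ i) (φ j) with hp
  set q := herm (φ k) (φ i) with hq
  set r := herm (φ j) (φ k) with hr
  -- Gram determinant identity specialized to our three vectors
  have hdet := gram_det (φ i).1 (φ i).2 (φ j).1 (φ j).2 (φ k).1 (φ k).2
    ((starRingEnd ℂ) (φ i).1) ((starRingEnd ℂ) (φ i).2)
    ((starRingEnd ℂ) (φ j).1) ((starRingEnd ℂ) (φ j).2)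
    ((starRingEnd ℂ) (φ k).1) ((starRingEnd ℂ) (φ k).2)
  have e1 : herm (φ i) (φ i) = (R : ℂ) := by rw [herm_self, hsphere]
  have e2 : herm (φ j) (φ j) = (R : ℂ) := by rw [herm_self, hsphere]
  have e3 : herm (φ k) (φ k) = (R : ℂ) := by rw [herm_self, hsphere]
  have hdet' : (R : ℂ) * (R : ℂ) * (R : ℂ) + p * r * q
        + (starRingEnd ℂ) q * (starRingEnd ℂ) r * (starRingEnd ℂ) p
      = (R : ℂ) * (r * (starRingEnd ℂ) r) + (R : ℂ) * ((starRingEnd ℂ) q * q)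
        + (R : ℂ) * (p * (starRingEnd ℂ) p) := by
    have sp : (starRingEnd ℂ) p = herm (φ j) (φ i) := (herm_symm _ _).symm
    have sq' : (starRingEnd ℂ) q = herm (φ i) (φ k) := (herm_symm _ _).symm
    have sr : (starRingEnd ℂ) r = herm (φ k) (φ j) := (herm_symm _ _).symm
    have e1' : (starRingEnd ℂ) (φ i).1 * (φ i).1 + (starRingEnd ℂ) (φ i).2 * (φ i).2 = (R : ℂ) := e1
    have e2' : (starRingEnd ℂ) (φ j).1 * (φ j).1 + (starRingEnd ℂ) (φ j).2 * (φ j).2 = (R : ℂ) := e2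
    have e3' : (starRingEnd ℂ) (φ k).1 * (φ k).1 + (starRingEnd ℂ) (φ k).2 * (φ k).2 = (R : ℂ) := e3
    rw [e1', e2', e3'] at hdet
    rw [sp, sq', sr, hp, hq, hr]
    simp only [herm]
    linear_combination hdet
  -- take real parts
  have hre : 2 * (p * q * r).re
      = R * (‖p‖ ^ 2 + ‖q‖ ^ 2 + ‖r‖ ^ 2) - R ^ 3 := by
    have := congrArg Complex.re hdet'
    simp only [Complex.add_re, Complex.mul_re, Complex.mul_im, Complex.ofReal_re,
      Complex.ofReal_im, Complex.conj_re, Complex.conj_im] at this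
    have hap : ‖p‖ ^ 2 = p.re ^ 2 + p.im ^ 2 := by
      rw [Complex.sq_norm, Complex.normSq_apply]; ring
    have haq : ‖q‖ ^ 2 = q.re ^ 2 + q.im ^ 2 := by
      rw [Complex.sq_norm, Complex.normSq_apply]; ring
    have har : ‖r‖ ^ 2 = r.re ^ 2 + r.im ^ 2 := by
      rw [Complex.sq_norm, Complex.normSq_apply]; ring
    simp only [Complex.mul_re, Complex.mul_im, hap, haq, har]
    linear_combination this
  have hRne : (R : ℝ) ≠ 0 := ne_of_gt hR
  have hc : (2 / R : ℂ) = ((2 / R : ℝ) : ℂ) := by push_cast; ring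
  rw [hc]
  simp only [norm_mul, Complex.norm_real, Real.norm_eq_abs, abs_of_pos (by positivity : (0:ℝ) < 2 / R)]
  have : (((2 / R : ℝ) : ℂ) * p * (((2 / R : ℝ) : ℂ) * q) * (((2 / R : ℝ) : ℂ) * r))
      = (((2/R)^3 : ℝ) : ℂ) * (p * q * r) := by push_cast; ring
  have hre' : (p * q * r).re
      = (R * (‖p‖ ^ 2 + ‖q‖ ^ 2 + ‖r‖ ^ 2) - R ^ 3) / 2 := by
    linarith
  rw [this, Complex.re_ofReal_mul, hre']
  field_simp
  ring
end
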